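/- Let r, s, t, k, l be integers with r² + s² = t², 2kl = rs, and t + k + l even. Define a = (t + k + l)/2, b = (t + k − l)/2, c = (t − k + l)/2, d = (t − k − l)/2. Then a, b, c, d are integers and every 2×2 matrix whose four entries are a, b, c, d in some order has integer eigenvalues. -/
import Mathlib

/-- A 2×2 integer matrix has integer eigenvalues if its characteristic polynomial
splits over ℤ, i.e. there are integers λ₁, λ₂ with λ₁ + λ₂ = trace M and λ₁·λ₂ = det M. -/
def hasIntEigenvalues (M : Matrix (Fin 2) (Fin 2) ℤ) : Prop :=
  ∃ lam1 lam2 : ℤ, lam1 + lam2 = Matrix.trace M ∧ lam1 * lam2 = Matrix.det M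

/-- The multiset of entries of a 2×2 integer matrix. -/
def entriesMultiset (M : Matrix (Fin 2) (Fin 2) ℤ) : Multiset ℤ :=
  {M 0 0, M 0 1, M 1 0, M 1 1}

lemma perm2_aux {x y a b : ℤ} (h : ({x, y} : Multiset ℤ) = {a, b}) :
    (x = a ∧ y = b) ∨ (x = b ∧ y = a) := by
  have hx : x ∈ ({a, b} : Multiset ℤ) := by rw [← h]; simp
  simp only [Multiset.insert_eq_cons, Multiset.mem_cons, Multiset.mem_singleton] at hx
  simp only [Multiset.insert_eq_cons, ← Multiset.cons_zero] at h
  rcases hx with hx | hx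
  · subst hx
    exact Or.inl ⟨rfl, by simpa using (Multiset.cons_inj_right x).mp h⟩
  · subst hx
    rw [Multiset.cons_swap a x] at h
    exact Or.inr ⟨rfl, by simpa using (Multiset.cons_inj_right x).mp h⟩

lemma perm3_aux {x y z a b c : ℤ} (h : ({x, y, z} : Multiset ℤ) = {a, b, c}) :
    (x = a ∧ ({y, z} : Multiset ℤ) = {b, c}) ∨
    (x = b ∧ ({y, z} : Multiset ℤ) = {a, c}) ∨
    (x = c ∧ ({y, z} : Multiset ℤ) = {a, b}) := by
  have hx : x ∈ ({a, b, c} : Multiset ℤ) := by rw [← h]; simp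
  simp only [Multiset.insert_eq_cons, Multiset.mem_cons, Multiset.mem_singleton] at hx
  simp only [Multiset.insert_eq_cons, ← Multiset.cons_zero] at h
  rcases hx with hx | hx | hx
  · subst hx
    exact Or.inl ⟨rfl, by simpa [Multiset.insert_eq_cons, ← Multiset.cons_zero]
      using (Multiset.cons_inj_right x).mp h⟩
  · subst hx
    rw [Multiset.cons_swap a x] at h
    exact Or.inr (Or.inl ⟨rfl, by simpa [Multiset.insert_eq_cons, ← Multiset.cons_zero]
      using (Multiset.cons_inj_right x).mp h⟩)
  · subst hx
    rw [Multiset.cons_swap b x, Multiset.cons_swap a x] at h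
    exact Or.inr (Or.inr ⟨rfl, by simpa [Multiset.insert_eq_cons, ← Multiset.cons_zero]
      using (Multiset.cons_inj_right x).mp h⟩)

lemma perm4_aux {x y z w a b c d : ℤ} (h : ({x, y, z, w} : Multiset ℤ) = {a, b, c, d}) :
    (x = a ∧ ({y, z, w} : Multiset ℤ) = {b, c, d}) ∨
    (x = b ∧ ({y, z, w} : Multiset ℤ) = {a, c, d}) ∨
    (x = c ∧ ({y, z, w} : Multiset ℤ) = {a, b, d}) ∨
    (x = d ∧ ({y, z, w} : Multiset ℤ) = {a, b, c}) := by
  have hx : x ∈ ({a, b, c, d} : Multiset ℤ) := by rw [← h]; simp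
  simp only [Multiset.insert_eq_cons, Multiset.mem_cons, Multiset.mem_singleton] at hx
  simp only [Multiset.insert_eq_cons, ← Multiset.cons_zero] at h
  rcases hx with hx | hx | hx | hx
  · subst hx
    exact Or.inl ⟨rfl, by simpa [Multiset.insert_eq_cons, ← Multiset.cons_zero]
      using (Multiset.cons_inj_right x).mp h⟩
  · subst hx
    rw [Multiset.cons_swap a x] at h
    exact Or.inr (Or.inl ⟨rfl, by simpa [Multiset.insert_eq_cons, ← Multiset.cons_zero]
      using (Multiset.cons_inj_right x).mp h⟩)
  · subst hx
    rw [Multiset.cons_swap b x, Multiset.cons_swap a x] at h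
    exact Or.inr (Or.inr (Or.inl ⟨rfl, by simpa [Multiset.insert_eq_cons, ← Multiset.cons_zero]
      using (Multiset.cons_inj_right x).mp h⟩))
  · subst hx
    rw [Multiset.cons_swap c x, Multiset.cons_swap b x, Multiset.cons_swap a x] at h
    exact Or.inr (Or.inr (Or.inr ⟨rfl, by simpa [Multiset.insert_eq_cons, ← Multiset.cons_zero]
      using (Multiset.cons_inj_right x).mp h⟩))

theorem stmt_6 (r s t k l : ℤ) (hpy : r ^ 2 + s ^ 2 = t ^ 2)
    (hkl : 2 * k * l = r * s) (heven : Even (t + k + l)) :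
    ∃ a b c d : ℤ,
      2 * a = t + k + l ∧ 2 * b = t + k - l ∧ 2 * c = t - k + l ∧ 2 * d = t - k - l ∧
      ∀ M : Matrix (Fin 2) (Fin 2) ℤ,
        entriesMultiset M = {a, b, c, d} → hasIntEigenvalues M := by
  obtain ⟨e, he'⟩ := heven
  have he : t + k + l = 2 * e := by linarith
  have hEu : Even (t + r + s) := by
    have h2 : Even ((t + r + s) * (t + r + s)) :=
      ⟨t * t + t * r + t * s + r * s, by linear_combination hpy⟩
    rcases Int.even_mul.mp h2 with h | h <;> exact h
  obtain ⟨u, hu'⟩ := hEu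
  have hu : 2 * u = t + r + s := by linarith
  obtain ⟨v, hv⟩ : ∃ v : ℤ, 2 * v = t + r - s := ⟨u - s, by linarith⟩
  have key : ∀ x y z w : ℤ, ({x, y, z, w} : Multiset ℤ) = {e, e - l, e - k, e - k - l} →
      ∃ l1 l2 : ℤ, l1 + l2 = x + w ∧ l1 * l2 = x * w - y * z := by
    intro x y z w h
    rcases perm4_aux h with ⟨rfl, h3⟩ | ⟨rfl, h3⟩ | ⟨rfl, h3⟩ | ⟨rfl, h3⟩ <;>
      rcases perm3_aux h3 with ⟨rfl, h2⟩ | ⟨rfl, h2⟩ | ⟨rfl, h2⟩ <;>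
      rcases perm2_aux h2 with ⟨rfl, rfl⟩ | ⟨rfl, rfl⟩ <;>
      first
      | exact ⟨t, k, by linarith, by linear_combination k * he⟩
      | exact ⟨t, -k, by linarith, by linear_combination (-k) * he⟩
      | exact ⟨t, l, by linarith, by linear_combination l * he⟩
      | exact ⟨t, -l, by linarith, by linear_combination (-l) * he⟩
      | (refine ⟨u, t - u, by linarith, ?_⟩
         have h4 : (4 : ℤ) * (u * (t - u)) = 4 * (-(k * l)) := by
           linear_combination (t - r - s - 2 * u) * hu - hpy + 2 * hkl
         have h5 : u * (t - u) = -(k * l) := by linarith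
         linear_combination h5)
      | (refine ⟨v, t - v, by linarith, ?_⟩
         have h4 : (4 : ℤ) * (v * (t - v)) = 4 * (k * l) := by
           linear_combination (t - r + s - 2 * v) * hv - hpy - 2 * hkl
         have h5 : v * (t - v) = k * l := by linarith
         linear_combination h5)
  refine ⟨e, e - l, e - k, e - k - l, by linarith, by linarith, by linarith, by linarith, ?_⟩
  intro M hM
  obtain ⟨l1, l2, h1, h2⟩ := key _ _ _ _ hM
  exact ⟨l1, l2, by rw [Matrix.trace_fin_two]; exact h1,
    by rw [Matrix.det_fin_two]; exact h2⟩
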